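/- For every n ≥ 1, the murtage number of the underlying graph of the finite Jaco graph J_n(1) satisfies 0 ≤ m(J_n(1)) ≤ 3. -/

import Mathlib

open SimpleGraph

/-- In-degree of vertex `j` in the infinite Jaco graph `J_∞(1)`:
the number of `i < j` with an arc `(v_i, v_j)`, i.e. `i < j` and `j ≤ 2i - d⁻(v_i)`. -/
noncomputable def jacoInDeg (j : ℕ) : ℕ :=
  Nat.strongRecOn j fun j ih =>
    ((Finset.range j).attach.filter
      (fun i => j ≤ 2 * i.1 - ih i.1 (Finset.mem_range.mp i.2))).card

/-- Out-degree of vertex `i` in `J_∞(1)`: the number of `j` with `i < j ≤ 2i - d⁻(v_i)`. -/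
noncomputable def jacoOutDeg (i : ℕ) : ℕ := (Finset.Ioc i (2 * i - jacoInDeg i)).card

/-- The underlying (undirected, simple) graph of the infinite Jaco graph `J_∞(1)` on `ℕ`,
with vertex `i` playing the role of `v_i`. -/
def JacoInf : SimpleGraph ℕ where
  Adj i j := (i < j ∧ j ≤ 2 * i - jacoInDeg i) ∨ (j < i ∧ i ≤ 2 * j - jacoInDeg j)
  symm := ⟨fun i j h => Or.symm h⟩
  loopless := ⟨fun i h => by rcases h with ⟨h, -⟩ | ⟨h, -⟩ <;> omega⟩

/-- The underlying graph of the finite Jaco graph `J_n(1)`: the subgraph of `J_∞(1)`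
induced by `{v_1, …, v_n}`, with `(k : Fin n)` representing `v_{k+1}`. -/
def Jaco (n : ℕ) : SimpleGraph (Fin n) := JacoInf.comap (fun k => (k : ℕ) + 1)

/-- `s` is an independent set of `G`. -/
def IsIndepSet {V : Type*} (G : SimpleGraph V) (s : Set V) : Prop :=
  s.Pairwise fun a b => ¬ G.Adj a b

/-- The independence number of `G`. -/
noncomputable def indepNum {V : Type*} [Fintype V] (G : SimpleGraph V) : ℕ :=
  sSup {k | ∃ s : Set V, _root_.IsIndepSet G s ∧ s.ncard = k}

/-- `s` is a vertex cover of `G`: it meets every edge. -/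
def IsVertexCover {V : Type*} (G : SimpleGraph V) (s : Set V) : Prop :=
  ∀ ⦃a b : V⦄, G.Adj a b → a ∈ s ∨ b ∈ s

/-- The vertex covering number of `G`. -/
noncomputable def coverNum {V : Type*} [Fintype V] (G : SimpleGraph V) : ℕ :=
  sInf {k | ∃ s : Set V, _root_.IsVertexCover G s ∧ s.ncard = k}

/-- `s` is a dominating set of `G`. -/
def IsDomSet {V : Type*} (G : SimpleGraph V) (s : Set V) : Prop :=
  ∀ v ∉ s, ∃ u ∈ s, G.Adj u v

/-- The domination number `γ(G)`. -/
noncomputable def domNum {V : Type*} [Fintype V] (G : SimpleGraph V) : ℕ :=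
  sInf {k | ∃ s : Set V, IsDomSet G s ∧ s.ncard = k}

/-- The murtage number `m(G)`: the minimum number of edges whose addition to `G`
strictly decreases the domination number (and `0` when `γ(G) = 1`). -/
noncomputable def murtage {V : Type*} [Fintype V] (G : SimpleGraph V) : ℕ :=
  if domNum G = 1 then 0
  else sInf {k | ∃ H : SimpleGraph V, G ≤ H ∧ domNum H < domNum G ∧
        (H.edgeSet \ G.edgeSet).ncard = k}

/-- `γ⁻(G)`: the minimum number of vertices whose removal strictly decreases
the domination number. -/
noncomputable def gammaMinus {V : Type*} [Fintype V] (G : SimpleGraph V) : ℕ :=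
  sInf {k | ∃ s : Set V, s.ncard = k ∧
        @domNum _ (Set.toFinite sᶜ).fintype (G.induce sᶜ) < domNum G}

/-- The bondage number `b(G)`: the minimum number of edges whose removal strictly
increases the domination number. -/
noncomputable def bondage {V : Type*} [Fintype V] (G : SimpleGraph V) : ℕ :=
  sInf {k | ∃ H : SimpleGraph V, H ≤ G ∧ domNum G < domNum H ∧
        (G.edgeSet \ H.edgeSet).ncard = k}

/-- The maximum degree `Δ(G)`. -/
noncomputable def maxDeg {V : Type*} [Fintype V] (G : SimpleGraph V) : ℕ :=
  Finset.univ.sup fun v => (G.neighborSet v).ncard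

lemma jacoInDeg_eq (j : ℕ) : jacoInDeg j =
    ((Finset.range j).attach.filter (fun i => j ≤ 2 * i.1 - jacoInDeg i.1)).card := by
  rw [jacoInDeg, Nat.strongRecOn_eq]; rfl

lemma d0 : jacoInDeg 0 = 0 := by rw [jacoInDeg_eq]; simp

lemma d1 : jacoInDeg 1 = 0 := by
  rw [jacoInDeg_eq]
  rw [Finset.card_eq_zero, Finset.filter_eq_empty_iff]
  rintro ⟨i, hi⟩ _
  have hi0 : i = 0 := by simpa using hi
  subst hi0
  simp [d0]

lemma d2 : jacoInDeg 2 = 1 := by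
  rw [jacoInDeg_eq, Finset.card_filter,
    Finset.sum_attach (Finset.range 2) (fun i => if 2 ≤ 2 * i - jacoInDeg i then 1 else 0),
    show Finset.range 2 = {0, 1} from rfl,
    Finset.sum_insert (by decide), Finset.sum_singleton]
  simp [d0, d1]

lemma adj_one {j : ℕ} (h : JacoInf.Adj 1 j) : j = 2 := by
  change (1 < j ∧ j ≤ 2 * 1 - jacoInDeg 1) ∨ (j < 1 ∧ 1 ≤ 2 * j - jacoInDeg j) at h
  rcases h with ⟨h1, h2⟩ | ⟨h1, h2⟩
  · rw [d1] at h2; omega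
  · have hj : j = 0 := by omega
    subst hj; rw [d0] at h2; omega

lemma adj_two {j : ℕ} (h : JacoInf.Adj 2 j) : j = 1 ∨ j = 3 := by
  change (2 < j ∧ j ≤ 2 * 2 - jacoInDeg 2) ∨ (j < 2 ∧ 2 ≤ 2 * j - jacoInDeg j) at h
  rcases h with ⟨h1, h2⟩ | ⟨h1, h2⟩
  · rw [d2] at h2; omega
  · interval_cases j
    · rw [d0] at h2; omega
    · exact Or.inl rfl


/-- For every `n ≥ 1`, `0 ≤ m(J_n(1)) ≤ 3`. -/
theorem jaco_murtage_le_three (n : ℕ) (hn : 1 ≤ n) :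
    0 ≤ murtage (Jaco n) ∧ murtage (Jaco n) ≤ 3 := by
  refine ⟨Nat.zero_le _, ?_⟩
  -- obtain a minimum dominating set
  have hmem : ∃ s : Set (Fin n), IsDomSet (Jaco n) s ∧ s.ncard = domNum (Jaco n) :=
    Nat.sInf_mem (s := {k | ∃ s : Set (Fin n), IsDomSet (Jaco n) s ∧ s.ncard = k})
      ⟨(Set.univ : Set (Fin n)).ncard, Set.univ, fun v hv => absurd (Set.mem_univ v) hv, rfl⟩
  obtain ⟨S, hS, hcard⟩ := hmem
  have hγ0 : domNum (Jaco n) ≠ 0 := by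
    intro h0
    rw [h0] at hcard
    have hSe : S = ∅ := (Set.ncard_eq_zero (Set.toFinite S)).mp hcard
    obtain ⟨u, hu, -⟩ := hS ⟨0, hn⟩ (by rw [hSe]; exact Set.notMem_empty _)
    rw [hSe] at hu; exact Set.notMem_empty _ hu
  by_cases h1 : domNum (Jaco n) = 1
  · rw [murtage, if_pos h1]; omega
  have hγ2 : 2 ≤ domNum (Jaco n) := by omega
  -- n ≥ 3
  have hn3 : 3 ≤ n := by
    by_contra hlt
    push_neg at hlt
    apply h1
    refine le_antisymm ?_ (by omega)
    apply Nat.sInf_le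
    refine ⟨{⟨n - 1, by omega⟩}, ?_, Set.ncard_singleton _⟩
    intro v hv
    refine ⟨⟨n - 1, by omega⟩, Set.mem_singleton _, ?_⟩
    have hvne : (v : ℕ) ≠ n - 1 := fun h => hv (by ext; exact h)
    have hvlt : (v : ℕ) < n := v.isLt
    have hn2 : n = 2 ∧ (v : ℕ) = 0 := by omega
    show JacoInf.Adj ((n - 1) + 1) ((v : ℕ) + 1)
    have e1 : n - 1 + 1 = 2 := by omega
    have e2 : (v : ℕ) + 1 = 1 := by omega
    rw [e1, e2]
    exact (Or.inr ⟨by omega, by rw [d1]⟩ :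
      (2 < 1 ∧ 1 ≤ 2 * 2 - jacoInDeg 2) ∨ (1 < 2 ∧ 2 ≤ 2 * 1 - jacoInDeg 1))
  -- x ∈ S with small index (the dominator of vertex v_1)
  have hx : ∃ x ∈ S, (x : ℕ) ≤ 1 := by
    by_cases h0 : (⟨0, by omega⟩ : Fin n) ∈ S
    · exact ⟨_, h0, by simp⟩
    · obtain ⟨u, huS, hadju⟩ := hS ⟨0, by omega⟩ h0
      have hj : JacoInf.Adj 1 ((u : ℕ) + 1) := JacoInf.adj_symm hadju
      have := adj_one hj
      exact ⟨u, huS, by omega⟩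
  obtain ⟨x, hxS, hxval⟩ := hx
  have hS'card : (S \ {x}).ncard = domNum (Jaco n) - 1 := by
    rw [Set.ncard_diff_singleton_of_mem hxS, hcard]
  have hS'ne : (S \ {x}).Nonempty :=
    Set.nonempty_of_ncard_ne_zero (by omega)
  obtain ⟨w, hw⟩ := hS'ne
  -- S \ {x} dominates every vertex with index ≥ 3
  have hdom' : ∀ v : Fin n, v ∉ S \ {x} → 3 ≤ (v : ℕ) → ∃ u ∈ S \ {x}, (Jaco n).Adj u v := by
    intro v hv hv3
    by_cases hvS : v ∈ S
    · exfalso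
      have hvx : v = x := by
        by_contra hne
        exact hv ⟨hvS, hne⟩
      have : (v : ℕ) ≤ 1 := hvx ▸ hxval
      omega
    · obtain ⟨u, huS, hadju⟩ := hS v hvS
      refine ⟨u, ⟨huS, ?_⟩, hadju⟩
      intro hux
      have huval : (u : ℕ) = (x : ℕ) := by rw [hux]
      have hj : JacoInf.Adj ((u : ℕ) + 1) ((v : ℕ) + 1) := hadju
      have hcases : (u : ℕ) = 0 ∨ (u : ℕ) = 1 := by omega
      rcases hcases with h | h
      · rw [h] at hj
        have := adj_one hj
        omega
      · rw [h] at hj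
        have := adj_two hj
        omega
  -- the three added edges
  set i0 : Fin n := ⟨0, by omega⟩ with hi0
  set i1 : Fin n := ⟨1, by omega⟩ with hi1
  set i2 : Fin n := ⟨2, by omega⟩ with hi2
  set E : Set (Sym2 (Fin n)) := {s(w, i0), s(w, i1), s(w, i2)} with hE
  set H : SimpleGraph (Fin n) := Jaco n ⊔ SimpleGraph.fromEdgeSet E with hH
  have hdomH : IsDomSet H (S \ {x}) := by
    intro v hv
    by_cases h3 : 3 ≤ (v : ℕ)
    · obtain ⟨u, hu, hadj⟩ := hdom' v hv h3
      exact ⟨u, hu, Or.inl hadj⟩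
    · refine ⟨w, hw, ?_⟩
      have hne : w ≠ v := fun h => hv (h ▸ hw)
      have hvi : v = i0 ∨ v = i1 ∨ v = i2 := by
        have hval : (v : ℕ) = 0 ∨ (v : ℕ) = 1 ∨ (v : ℕ) = 2 := by omega
        rcases hval with h | h | h
        · exact Or.inl (by ext; exact h)
        · exact Or.inr (Or.inl (by ext; exact h))
        · exact Or.inr (Or.inr (by ext; exact h))
      have hmemE : s(w, v) ∈ E := by
        rcases hvi with h | h | h <;> subst h <;> simp [hE]
      exact Or.inr ((SimpleGraph.fromEdgeSet_adj E).mpr ⟨hmemE, hne⟩)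
  have hdomHle : domNum H ≤ domNum (Jaco n) - 1 :=
    Nat.sInf_le ⟨S \ {x}, hdomH, hS'card⟩
  have hltH : domNum H < domNum (Jaco n) := by omega
  have hsub : H.edgeSet \ (Jaco n).edgeSet ⊆ E := by
    intro e he
    rcases he with ⟨heH, heG⟩
    rw [hH, SimpleGraph.edgeSet_sup] at heH
    rcases heH with h | h
    · exact absurd h heG
    · rw [SimpleGraph.edgeSet_fromEdgeSet] at h
      exact h.1
  have hEfin : E.Finite :=
    (Set.finite_singleton _).insert _ |>.insert _
  have hcount : (H.edgeSet \ (Jaco n).edgeSet).ncard ≤ 3 := by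
    refine le_trans (Set.ncard_le_ncard hsub hEfin) ?_
    rw [hE]
    refine le_trans (Set.ncard_insert_le _ _) ?_
    have := Set.ncard_insert_le (s(w, i1)) {s(w, i2)}
    have h2 := Set.ncard_singleton (s(w, i2))
    omega
  rw [murtage, if_neg h1]
  exact le_trans (Nat.sInf_le ⟨H, le_sup_left, hltH, rfl⟩) hcount
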